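/- If a three-valued matrix M is paraconsistent, has properties (a) containment in classical logic, (b) proper basic connectives, (e) internalized consistency, (f) internalized logical equivalence, and (g) the sixteen logical-equivalence laws, and moreover satisfies the double-negation law ¬¬A ≡_M A for all formulas A, then the consequence relation ⊨_M coincides with the consequence relation ⊨_L of the matrix L of LP→⊥. (This is the paper's Uniqueness corollary: LP→⊥ is the only three-valued paraconsistent propositional logic with these properties and the double-negation law.) -/
import Mathlib


set_option autoImplicit true
set_option maxHeartbeats 1000000

/-- The three truth values of LP→⊥: true, false, both. -/
inductive V3 : Type
  | t
  | f
  | b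
  deriving DecidableEq

/-- Formulas of LP→⊥ over propositional variables of type `α`. -/
inductive Fml (α : Type) : Type
  | var : α → Fml α
  | bot : Fml α
  | neg : Fml α → Fml α
  | conj : Fml α → Fml α → Fml α
  | disj : Fml α → Fml α → Fml α
  | imp : Fml α → Fml α → Fml α

namespace Fml

/-- ⊤ abbreviates ¬⊥. -/
def top {α : Type} : Fml α := neg bot

/-- A↔B abbreviates (A→B)∧(B→A). -/
def iff' {α : Type} (A B : Fml α) : Fml α := conj (imp A B) (imp B A)

end Fml

/-- LP→⊥ truth table for negation. -/
def negT : V3 → V3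
  | .f => .t
  | .t => .f
  | .b => .b

/-- LP→⊥ truth table for conjunction. -/
def conjT : V3 → V3 → V3
  | .f, _ => .f
  | _, .f => .f
  | .t, .t => .t
  | _, _ => .b

/-- LP→⊥ truth table for disjunction. -/
def disjT : V3 → V3 → V3
  | .t, _ => .t
  | _, .t => .t
  | .f, .f => .f
  | _, _ => .b

/-- LP→⊥ truth table for implication. -/
def impT : V3 → V3 → V3
  | .f, _ => .t
  | _, y => y

/-- The LP→⊥ valuation determined by an assignment `σ` of truth values to variables. -/
def eval {α : Type} (σ : α → V3) : Fml α → V3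
  | .var x => σ x
  | .bot => .f
  | .neg A => negT (eval σ A)
  | .conj A B => conjT (eval σ A) (eval σ B)
  | .disj A B => disjT (eval σ A) (eval σ B)
  | .imp A B => impT (eval σ A) (eval σ B)

/-- Logical equivalence in LP→⊥: the same value under every valuation. -/
def FEquiv {α : Type} (A B : Fml α) : Prop := ∀ σ : α → V3, eval σ A = eval σ B

/-- `φ ∈ [⊥]`: `φ` is logically equivalent to ⊥. -/
def EqBot {α : Type} (φ : Fml α) : Prop := ∀ σ : α → V3, eval σ φ = V3.f

/-- Semantic consequence in LP→⊥ (designated values t and b). -/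
def SemCons {α : Type} (Γ : Set (Fml α)) (A : Fml α) : Prop :=
  ∀ σ : α → V3, (∀ C ∈ Γ, eval σ C ≠ V3.f) → eval σ A ≠ V3.f

/-- A three-valued matrix for the signature ⊥, ¬, ∧, ∨, → with values {t,f,b}
(the designated values being t and b). -/
structure Mtx : Type where
  bot : V3
  neg : V3 → V3
  conj : V3 → V3 → V3
  disj : V3 → V3 → V3
  imp : V3 → V3 → V3

/-- The M-valuation extending the assignment `σ` of values to variables. -/
def MEval (M : Mtx) (σ : ℕ → V3) : Fml ℕ → V3
  | .var x => σ x
  | .bot => M.bot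
  | .neg A => M.neg (MEval M σ A)
  | .conj A B => M.conj (MEval M σ A) (MEval M σ B)
  | .disj A B => M.disj (MEval M σ A) (MEval M σ B)
  | .imp A B => M.imp (MEval M σ A) (MEval M σ B)

/-- The consequence relation ⊨_M of the matrix M (designated values t and b). -/
def MCons (M : Mtx) (Γ : Set (Fml ℕ)) (A : Fml ℕ) : Prop :=
  ∀ σ : ℕ → V3, (∀ C ∈ Γ, MEval M σ C ≠ V3.f) → MEval M σ A ≠ V3.f

/-- M-equivalence: the same value under every M-valuation. -/
def MEquiv (M : Mtx) (A B : Fml ℕ) : Prop := ∀ σ : ℕ → V3, MEval M σ A = MEval M σ B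

/-- Classical (two-valued) evaluation of formulas. -/
def clEval (σ : ℕ → Bool) : Fml ℕ → Bool
  | .var x => σ x
  | .bot => false
  | .neg A => !(clEval σ A)
  | .conj A B => clEval σ A && clEval σ B
  | .disj A B => clEval σ A || clEval σ B
  | .imp A B => !(clEval σ A) || clEval σ B

/-- Classical consequence ⊨_CL. -/
def CLCons (Γ : Set (Fml ℕ)) (A : Fml ℕ) : Prop :=
  ∀ σ : ℕ → Bool, (∀ C ∈ Γ, clEval σ C = true) → clEval σ A = true

/-- M is paraconsistent: some B does not follow from some {A, ¬A}. -/
def Paraconsistent (M : Mtx) : Prop :=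
  ∃ A B : Fml ℕ, ¬ MCons M ({A, A.neg} : Set (Fml ℕ)) B

/-- The internalization (A↔B)∧(¬A↔¬B) of logical equivalence. -/
def InternEq (φ ψ : Fml ℕ) : Fml ℕ :=
  (Fml.iff' φ ψ).conj (Fml.iff' φ.neg ψ.neg)

/-- Property (a): containment in classical logic. -/
def PropA (M : Mtx) : Prop := ∀ (Γ : Set (Fml ℕ)) (A : Fml ℕ), MCons M Γ A → CLCons Γ A

/-- Property (b): proper basic connectives. -/
def PropB (M : Mtx) : Prop :=
  (∀ (Γ : Set (Fml ℕ)) (A B : Fml ℕ), MCons M (insert A Γ) B ↔ MCons M Γ (A.imp B)) ∧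
  (∀ (Γ : Set (Fml ℕ)) (A B : Fml ℕ), MCons M Γ (A.conj B) ↔ (MCons M Γ A ∧ MCons M Γ B)) ∧
  (∀ (Γ : Set (Fml ℕ)) (A B C : Fml ℕ),
    MCons M (insert (A.disj B) Γ) C ↔ (MCons M (insert A Γ) C ∧ MCons M (insert B Γ) C))

/-- Property (e): internalized notion of consistency. -/
def PropE (M : Mtx) : Prop :=
  ∀ A : Fml ℕ,
    (∀ σ : ℕ → V3, MEval M σ A ≠ V3.b) ↔
      MCons M (∅ : Set (Fml ℕ)) ((A.imp .bot).disj (A.neg.imp .bot))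

/-- Property (f): internalized notion of logical equivalence. -/
def PropF (M : Mtx) : Prop :=
  ∀ A B : Fml ℕ, MEquiv M A B ↔ MCons M (∅ : Set (Fml ℕ)) (InternEq A B)

/-- Property (g): the sixteen logical-equivalence laws. -/
def PropG (M : Mtx) : Prop :=
  ∀ A B C : Fml ℕ,
    MEquiv M (A.conj .bot) .bot ∧
    MEquiv M (A.disj Fml.top) Fml.top ∧
    MEquiv M (A.conj Fml.top) A ∧
    MEquiv M (A.disj .bot) A ∧
    MEquiv M (A.conj A) A ∧
    MEquiv M (A.disj A) A ∧
    MEquiv M (A.conj B) (B.conj A) ∧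
    MEquiv M (A.disj B) (B.disj A) ∧
    MEquiv M ((A.conj B).conj C) (A.conj (B.conj C)) ∧
    MEquiv M ((A.disj B).disj C) (A.disj (B.disj C)) ∧
    MEquiv M (A.conj (B.disj C)) ((A.conj B).disj (A.conj C)) ∧
    MEquiv M (A.disj (B.conj C)) ((A.disj B).conj (A.disj C)) ∧
    MEquiv M ((A.imp B).conj (A.imp C)) (A.imp (B.conj C)) ∧
    MEquiv M ((A.imp C).conj (B.imp C)) ((A.disj B).imp C) ∧
    MEquiv M ((A.disj A.neg).imp B) B ∧
    MEquiv M (A.imp (B.imp C)) ((A.conj B).imp C)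

/-- A three-valued paraconsistent matrix with properties (a), (b), (e), (f), (g). -/
def GoodMtx (M : Mtx) : Prop :=
  Paraconsistent M ∧ PropA M ∧ PropB M ∧ PropE M ∧ PropF M ∧ PropG M

/-- The matrix L of LP→⊥. -/
def LPM : Mtx := ⟨V3.f, negT, conjT, disjT, impT⟩

/-- Uniqueness: any three-valued paraconsistent matrix with properties (a), (b),
(e), (f), (g) and the double-negation law has the consequence relation of LP→⊥. -/
theorem uniqueness (M : Mtx) (hM : GoodMtx M)
    (hdneg : ∀ A : Fml ℕ, MEquiv M A.neg.neg A) :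
    MCons M = MCons LPM := by
  obtain ⟨hpara, hA, hB, hE, hF, hG⟩ := hM
  -- Step 1: M.bot = f, via property (a).
  have hbot : M.bot = V3.f := by
    by_contra h
    have hc : CLCons ∅ .bot := hA ∅ .bot (fun σ _ => h)
    have := hc (fun _ => true) (fun C hC => absurd hC (Set.notMem_empty C))
    simp [clEval] at this
  -- negation is an involution
  have hinv : ∀ x, M.neg (M.neg x) = x := fun x => hdneg (.var 0) (fun _ => x)
  -- A → A is valid, via property (b)
  have hself : ∀ x, M.imp x x ≠ V3.f := by
    have h1 : MCons M (insert (Fml.var 0) ∅) (Fml.var 0) :=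
      fun σ h => h _ (Set.mem_insert _ _)
    have h2 := (hB.1 ∅ (.var 0) (.var 0)).mp h1
    exact fun x => h2 (fun _ => x) (fun C hC => absurd hC (Set.notMem_empty C))
  -- the sixteen laws, instantiated at variables
  obtain ⟨g1, g2, g3, g4, g5, g6, g7, g8, g9, g10, g11, g12, g13, g14, g15, g16⟩ :=
    hG (.var 0) (.var 1) (.var 2)
  have L1 : ∀ x, M.conj x V3.f = V3.f := by
    intro x; have h := g1 (fun _ => x); simp only [MEval, hbot] at h; exact h
  have L2 : ∀ x, M.disj x (M.neg V3.f) = M.neg V3.f := by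
    intro x; have h := g2 (fun _ => x); simp only [MEval, Fml.top, hbot] at h; exact h
  have L3 : ∀ x, M.conj x (M.neg V3.f) = x := by
    intro x; have h := g3 (fun _ => x); simp only [MEval, Fml.top, hbot] at h; exact h
  have L4 : ∀ x, M.disj x V3.f = x := by
    intro x; have h := g4 (fun _ => x); simp only [MEval, hbot] at h; exact h
  have L5 : ∀ x, M.conj x x = x := by
    intro x; have h := g5 (fun _ => x); simp only [MEval] at h; exact h
  have L6 : ∀ x, M.disj x x = x := by
    intro x; have h := g6 (fun _ => x); simp only [MEval] at h; exact h
  have L7 : ∀ x y, M.conj x y = M.conj y x := by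
    intro x y; have h := g7 (fun k => if k = 0 then x else y)
    simp only [MEval] at h; simpa using h
  have L8 : ∀ x y, M.disj x y = M.disj y x := by
    intro x y; have h := g8 (fun k => if k = 0 then x else y)
    simp only [MEval] at h; simpa using h
  have L13 : ∀ x y z, M.conj (M.imp x y) (M.imp x z) = M.imp x (M.conj y z) := by
    intro x y z
    have h := g13 (fun k => if k = 0 then x else if k = 1 then y else z)
    simp only [MEval] at h; simpa using h
  have L14 : ∀ x y z, M.conj (M.imp x z) (M.imp y z) = M.imp (M.disj x y) z := by
    intro x y z
    have h := g14 (fun k => if k = 0 then x else if k = 1 then y else z)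
    simp only [MEval] at h; simpa using h
  have L15 : ∀ x y, M.imp (M.disj x (M.neg x)) y = y := by
    intro x y; have h := g15 (fun k => if k = 0 then x else y)
    simp only [MEval] at h; simpa using h
  -- Step 2: some non-f value is negated to f, via property (a).
  have hnex : ∃ x, x ≠ V3.f ∧ M.neg x = V3.f := by
    by_contra h
    push_neg at h
    have hm : MCons M (insert (Fml.var 0) ∅) ((Fml.var 0).neg) := by
      intro σ hσ
      exact h _ (hσ _ (Set.mem_insert _ _))
    have hc := hA _ _ hm (fun _ => true)
      (by intro C hC; simp only [Set.mem_insert_iff, Set.mem_empty_iff_false, or_false] at hC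
          subst hC; rfl)
    simp [clEval] at hc
  obtain ⟨x0, hx0f, hx0⟩ := hnex
  cases x0 with
  | f => exact absurd rfl hx0f
  | b =>
    -- Case II: negation swaps f and b.  Refuted via property (e) at ⊤.
    exfalso
    have hnf : M.neg V3.f = V3.b := by
      have h := hinv V3.b; rw [hx0] at h; exact h
    have h1 : MCons M ∅ ((Fml.top.imp .bot).disj (Fml.top.neg.imp .bot)) := by
      intro σ _
      show M.disj (M.imp (M.neg M.bot) M.bot) (M.imp (M.neg (M.neg M.bot)) M.bot) ≠ V3.f
      rw [hbot, hinv, hnf]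
      have e1 : M.imp V3.b V3.f = V3.f := by
        have h := L15 V3.b V3.f
        rw [hx0, L4] at h; exact h
      rw [e1, L8, L4]
      exact hself V3.f
    have h2 := (hE Fml.top).mpr h1 (fun _ => V3.t)
    exact h2 (show M.neg M.bot = V3.b by rw [hbot, hnf])
  | t =>
    -- Case I: LP negation.
    have hnf : M.neg V3.f = V3.t := by
      have h := hinv V3.t; rw [hx0] at h; exact h
    have hnb : M.neg V3.b = V3.b := by
      cases h : M.neg V3.b with
      | t => have h2 := hinv V3.b; rw [h, hx0] at h2; exact absurd h2 (by decide)
      | f => have h2 := hinv V3.b; rw [h, hnf] at h2; exact absurd h2 (by decide)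
      | b => rfl
    have hneg : M.neg = negT := by
      funext v; cases v
      · exact hx0
      · exact hnf
      · exact hnb
    have L3' : ∀ x, M.conj x V3.t = x := by
      intro x; have h := L3 x; rw [hnf] at h; exact h
    have L2' : ∀ x, M.disj x V3.t = V3.t := by
      intro x; have h := L2 x; rw [hnf] at h; exact h
    have hconj : M.conj = conjT := by
      funext u v
      cases u <;> cases v
      · exact L5 V3.t
      · exact L1 V3.t
      · show M.conj V3.t V3.b = V3.b
        rw [L7]; exact L3' V3.b
      · exact L3' V3.f
      · exact L5 V3.f
      · show M.conj V3.f V3.b = V3.f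
        rw [L7]; exact L1 V3.b
      · exact L3' V3.b
      · exact L1 V3.b
      · exact L5 V3.b
    have hdisj : M.disj = disjT := by
      funext u v
      cases u <;> cases v
      · exact L6 V3.t
      · exact L4 V3.t
      · show M.disj V3.t V3.b = V3.t
        rw [L8]; exact L2' V3.b
      · exact L2' V3.f
      · exact L6 V3.f
      · show M.disj V3.f V3.b = V3.b
        rw [L8]; exact L4 V3.b
      · exact L2' V3.b
      · exact L4 V3.b
      · exact L6 V3.b
    have hit : ∀ y, M.imp V3.t y = y := by
      intro y
      have h := L15 V3.t y
      rw [hx0, L4] at h; exact h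
    have hib : ∀ y, M.imp V3.b y = y := by
      intro y
      have h := L15 V3.b y
      rw [hnb, L6] at h; exact h
    have hiff : M.imp V3.f V3.f = V3.t := by
      cases h : M.imp V3.f V3.f with
      | t => rfl
      | f => exact absurd h (hself V3.f)
      | b =>
        exfalso
        have hm : MCons M ∅ ((Fml.imp .bot .bot).neg) := by
          intro σ _
          show M.neg (M.imp M.bot M.bot) ≠ V3.f
          rw [hbot, h, hnb]
          decide
        have hc := hA _ _ hm (fun _ => true) (fun C hC => absurd hC (Set.notMem_empty C))
        simp [clEval] at hc
    have hift : M.imp V3.f V3.t = V3.t := by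
      have h := L14 V3.t V3.f V3.t
      rw [L4, hit, hconj] at h
      cases h2 : M.imp V3.f V3.t with
      | t => rfl
      | f => rw [h2] at h; exact absurd h (by decide)
      | b => rw [h2] at h; exact absurd h (by decide)
    have hifb : M.imp V3.f V3.b = V3.t := by
      have h := L13 V3.f V3.f V3.b
      rw [hconj] at h
      have e : conjT V3.f V3.b = V3.f := rfl
      rw [e, hiff] at h
      cases h2 : M.imp V3.f V3.b with
      | t => rfl
      | f => rw [h2] at h; exact absurd h (by decide)
      | b => rw [h2] at h; exact absurd h (by decide)
    have himp : M.imp = impT := by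
      funext u v
      cases u with
      | t => rw [hit]; cases v <;> rfl
      | b => rw [hib]; cases v <;> rfl
      | f =>
        cases v with
        | t => exact hift
        | f => exact hiff
        | b => exact hifb
    have hMeq : M = LPM := by
      have heta : M = ⟨M.bot, M.neg, M.conj, M.disj, M.imp⟩ := rfl
      rw [heta, hbot, hneg, hconj, hdisj, himp]; rfl
    rw [hMeq]
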